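/- Let α ∈ (0,1) be irrational, M ≥ 1, and let n have Ostrowski representation with both a nonzero digit at some index < M and a nonzero digit at some index ≥ M. Let k_{≥M}(n) denote the smallest index ≥ M with nonzero digit. Then for every T with q_{T−2} ≥ n, one has k_{≥M}(n) ≡ k_{≥M}(q_T − n) (mod 2). -/

import Mathlib

/-- Gauss-map iterates of `α`. -/
noncomputable def cfFrac (α : ℝ) : ℕ → ℝ
  | 0 => α
  | k + 1 => Int.fract (1 / cfFrac α k)

/-- Partial quotients of `α` (1-indexed, `cfA α 0 = 0` unused). -/
noncomputable def cfA (α : ℝ) : ℕ → ℕ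
  | 0 => 0
  | k + 1 => (⌊1 / cfFrac α k⌋).toNat

/-- Numerators of the convergents of `α`. -/
noncomputable def cfP (α : ℝ) : ℕ → ℕ
  | 0 => 0
  | 1 => 1
  | k + 2 => cfA α (k + 2) * cfP α (k + 1) + cfP α k

/-- Denominators of the convergents of `α`. -/
noncomputable def cfQ (α : ℝ) : ℕ → ℕ
  | 0 => 1
  | 1 => cfA α 1
  | k + 2 => cfA α (k + 2) * cfQ α (k + 1) + cfQ α k

/-- Distance from `x` to the nearest integer. -/
noncomputable def distNearInt (x : ℝ) : ℝ := min (Int.fract x) (1 - Int.fract x)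

/-- `b` is the sequence of digits of an Ostrowski representation of `n` w.r.t. `α`:
`n = Σ b_k q_k` with `0 ≤ b_0 ≤ a_1 - 1`, `0 ≤ b_k ≤ a_{k+1}` for `k ≥ 1`, and
`b_{k-1} = 0` whenever `b_k = a_{k+1}`. -/
def OstrowskiRep (α : ℝ) (n : ℕ) (b : ℕ → ℕ) : Prop :=
  b 0 ≤ cfA α 1 - 1 ∧
  (∀ k, 1 ≤ k → b k ≤ cfA α (k + 1)) ∧
  (∀ k, 1 ≤ k → b k = cfA α (k + 1) → b (k - 1) = 0) ∧
  ∃ N, (∀ k, N < k → b k = 0) ∧ n = ∑ k ∈ Finset.range (N + 1), b k * cfQ α k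


namespace Stmt19Aux

variable {α : ℝ}

lemma cfFrac_good (hα : α ∈ Set.Ioo (0:ℝ) 1) (hirr : Irrational α) :
    ∀ k, cfFrac α k ∈ Set.Ioo (0:ℝ) 1 ∧ Irrational (cfFrac α k) := by
  intro k
  induction k with
  | zero => exact ⟨hα, hirr⟩
  | succ k ih =>
    obtain ⟨⟨h0, h1⟩, hir⟩ := ih
    have hne : cfFrac α k ≠ 0 := ne_of_gt h0
    have hinv : Irrational (1 / cfFrac α k) := by
      rw [one_div]
      exact hir.inv
    have hfr : Irrational (Int.fract (1 / cfFrac α k)) := by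
      unfold Int.fract
      exact hinv.sub_intCast _
    constructor
    · constructor
      · rcases lt_or_eq_of_le (Int.fract_nonneg (1 / cfFrac α k)) with h | h
        · simpa [cfFrac] using h
        · exfalso
          rw [← h] at hfr
          exact hfr ⟨0, by norm_num⟩
      · simpa [cfFrac] using Int.fract_lt_one (1 / cfFrac α k)
    · simpa [cfFrac] using hfr

lemma one_lt_inv_cfFrac (hα : α ∈ Set.Ioo (0:ℝ) 1) (hirr : Irrational α) (k : ℕ) :
    1 < 1 / cfFrac α k := by
  obtain ⟨⟨h0, h1⟩, _⟩ := cfFrac_good hα hirr k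
  rw [lt_div_iff₀ h0]; linarith

lemma cfA_pos (hα : α ∈ Set.Ioo (0:ℝ) 1) (hirr : Irrational α) (k : ℕ) :
    1 ≤ cfA α (k + 1) := by
  have := one_lt_inv_cfFrac hα hirr k
  have : (1:ℤ) ≤ ⌊1 / cfFrac α k⌋ := by
    exact_mod_cast Int.le_floor.2 (by exact_mod_cast this.le)
  simp only [cfA]
  omega

lemma cfA_cast (hα : α ∈ Set.Ioo (0:ℝ) 1) (hirr : Irrational α) (k : ℕ) :
    (cfA α (k + 1) : ℝ) = (⌊1 / cfFrac α k⌋ : ℝ) := by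
  have := one_lt_inv_cfFrac hα hirr k
  have h1 : (1:ℤ) ≤ ⌊1 / cfFrac α k⌋ := Int.le_floor.2 (by exact_mod_cast this.le)
  simp only [cfA]
  have h2 := Int.toNat_of_nonneg (show (0:ℤ) ≤ ⌊1 / cfFrac α k⌋ by omega)
  exact_mod_cast congrArg (Int.cast : ℤ → ℝ) h2

/-- key recurrence for Gauss iterates -/
lemma cfFrac_rec (hα : α ∈ Set.Ioo (0:ℝ) 1) (hirr : Irrational α) (k : ℕ) :
    cfFrac α k * ((cfA α (k+1) : ℝ) + cfFrac α (k+1)) = 1 := by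
  obtain ⟨⟨h0, _⟩, _⟩ := cfFrac_good hα hirr k
  have hx : cfFrac α (k+1) = 1 / cfFrac α k - (⌊1 / cfFrac α k⌋ : ℝ) := rfl
  rw [cfA_cast hα hirr, hx]
  field_simp
  ring

lemma cfQ_pos (hα : α ∈ Set.Ioo (0:ℝ) 1) (hirr : Irrational α) :
    ∀ k, 1 ≤ cfQ α k := by
  intro k
  induction k using Nat.strong_induction_on with
  | _ k ih =>
    match k with
    | 0 => simp [cfQ]
    | 1 => simpa [cfQ] using cfA_pos hα hirr 0
    | (k+2) =>
      have h1 := ih (k+1) (by omega)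
      have h0 := ih k (by omega)
      have ha := cfA_pos hα hirr (k+1)
      simp only [cfQ]
      nlinarith

lemma cfQ_mono (hα : α ∈ Set.Ioo (0:ℝ) 1) (hirr : Irrational α) :
    ∀ i j, i ≤ j → cfQ α i ≤ cfQ α j := by
  have step : ∀ k, cfQ α k ≤ cfQ α (k+1) := by
    intro k
    match k with
    | 0 => simpa [cfQ] using cfA_pos hα hirr 0
    | (k+1) =>
      have h0 := cfQ_pos hα hirr k
      have ha := cfA_pos hα hirr (k+1)
      simp only [cfQ]
      nlinarith
  intro i j hij
  induction j with
  | zero =>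
    have : i = 0 := by omega
    simp [this]
  | succ j ihj =>
    rcases Nat.lt_or_ge i (j+1) with h | h
    · exact le_trans (ihj (by omega)) (step j)
    · have : i = j+1 := by omega
      simp [this]

lemma cfQ_strict (hα : α ∈ Set.Ioo (0:ℝ) 1) (hirr : Irrational α) (k : ℕ) (hk : 1 ≤ k) :
    cfQ α k < cfQ α (k+1) := by
  match k, hk with
  | (k+1), _ =>
    have h0 := cfQ_pos hα hirr k
    have h1 := cfQ_pos hα hirr (k+1)
    have ha := cfA_pos hα hirr (k+1)
    simp only [cfQ]
    nlinarith

/-- determinant identity -/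
lemma det_pq (α : ℝ) : ∀ k : ℕ, (cfP α (k+1) : ℤ) * cfQ α k - (cfP α k : ℤ) * cfQ α (k+1) = (-1)^k := by
  intro k
  induction k with
  | zero => simp [cfP, cfQ]
  | succ k ih =>
    match k, ih with
    | 0, ih =>
      simp only [cfP, cfQ]
      push_cast
      ring
    | (k+1), ih =>
      have e1 : cfP α (k+3) = cfA α (k+3) * cfP α (k+2) + cfP α (k+1) := rfl
      have e2 : cfQ α (k+3) = cfA α (k+3) * cfQ α (k+2) + cfQ α (k+1) := rfl
      have : (cfP α (k+3) : ℤ) * cfQ α (k+2) - (cfP α (k+2) : ℤ) * cfQ α (k+3)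
           = -((cfP α (k+2) : ℤ) * cfQ α (k+1) - (cfP α (k+1) : ℤ) * cfQ α (k+2)) := by
        rw [e1, e2]; push_cast; ring
      rw [this, ih]
      ring


noncomputable def th (α : ℝ) (k : ℕ) : ℝ := (cfQ α k : ℝ) * α - (cfP α k : ℝ)
noncomputable def DD (α : ℝ) (k : ℕ) : ℝ := (-1)^k * th α k



lemma neg_one_sq_pow (k : ℕ) : ((-1:ℝ))^k * (-1)^k = 1 := by
  rw [← pow_add]
  exact Even.neg_one_pow ⟨k, by ring⟩

lemma th_eq_DD (k : ℕ) : th α k = (-1)^k * DD α k := by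
  have hs := neg_one_sq_pow k
  simp only [DD, ← mul_assoc]
  rw [hs, one_mul]

lemma th_rec (k : ℕ) : th α (k+2) = (cfA α (k+2):ℝ) * th α (k+1) + th α k := by
  simp only [th, cfQ, cfP]
  push_cast
  ring

lemma DD_rec (k : ℕ) : DD α (k+2) = DD α k - (cfA α (k+2):ℝ) * DD α (k+1) := by
  have h := th_rec (α := α) (k := k)
  simp only [DD]
  rw [h]
  ring

lemma DD_zero : DD α 0 = α := by
  simp [DD, th, cfQ, cfP]

lemma DD_main (hα : α ∈ Set.Ioo (0:ℝ) 1) (hirr : Irrational α) :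
    ∀ k, 0 < DD α k ∧ DD α (k+1) = cfFrac α (k+1) * DD α k := by
  intro k
  induction k with
  | zero =>
    constructor
    · rw [DD_zero]; exact hα.1
    · have h := cfFrac_rec hα hirr 0
      have h0 : cfFrac α 0 = α := rfl
      rw [h0] at h
      have e1 : DD α 1 = -((cfA α 1 : ℝ) * α - 1) := by
        simp [DD, th, cfQ, cfP]
      rw [e1, DD_zero]
      nlinarith [h]
  | succ k ih =>
    obtain ⟨hpos, heq⟩ := ih
    have hx := (cfFrac_good hα hirr (k+1)).1
    have hx2 := (cfFrac_good hα hirr (k+2)).1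
    have hpos1 : 0 < DD α (k+1) := by rw [heq]; exact mul_pos hx.1 hpos
    refine ⟨hpos1, ?_⟩
    have hrec := cfFrac_rec hα hirr (k+1)
    have hdd := DD_rec (α := α) k
    -- DD (k+2) = DD k - a_{k+2} DD(k+1) = x_{k+2} * DD (k+1)
    have hxne : cfFrac α (k+1) ≠ 0 := ne_of_gt hx.1
    have : cfFrac α (k+1) * (DD α (k+2) - cfFrac α (k+2) * DD α (k+1)) = 0 := by
      rw [hdd, heq]
      nlinarith [hrec]
    have := mul_eq_zero.1 this
    rcases this with h | h
    · exact absurd h hxne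
    · linarith

lemma DD_pos (hα : α ∈ Set.Ioo (0:ℝ) 1) (hirr : Irrational α) (k : ℕ) : 0 < DD α k :=
  (DD_main hα hirr k).1

lemma DD_succ_lt (hα : α ∈ Set.Ioo (0:ℝ) 1) (hirr : Irrational α) (k : ℕ) :
    DD α (k+1) < DD α k := by
  have h := (DD_main hα hirr k).2
  obtain ⟨hx1, hx2⟩ := (cfFrac_good hα hirr (k+1)).1
  have hp := DD_pos hα hirr k
  rw [h]
  nlinarith

lemma DD_anti (hα : α ∈ Set.Ioo (0:ℝ) 1) (hirr : Irrational α) {i j : ℕ} (hij : i ≤ j) :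
    DD α j ≤ DD α i := by
  induction j with
  | zero => have : i = 0 := by omega
            simp [this]
  | succ j ihj =>
    rcases Nat.lt_or_ge i (j+1) with h | h
    · exact le_trans (DD_succ_lt hα hirr j).le (ihj (by omega))
    · have : i = j + 1 := by omega
      simp [this]

lemma DD_anti_strict (hα : α ∈ Set.Ioo (0:ℝ) 1) (hirr : Irrational α) {i j : ℕ} (hij : i < j) :
    DD α j < DD α i :=
  lt_of_le_of_lt (DD_anti hα hirr hij) (by simpa using DD_succ_lt hα hirr i)



lemma Icc_insert (j N : ℕ) (h : j ≤ N) :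
    Finset.Icc j N = insert j (Finset.Icc (j+1) N) := by
  ext x
  simp only [Finset.mem_Icc, Finset.mem_insert]
  omega

lemma sum_Icc_split (f : ℕ → ℝ) (j N : ℕ) (h : j ≤ N) :
    ∑ k ∈ Finset.Icc j N, f k = f j + ∑ k ∈ Finset.Icc (j+1) N, f k := by
  rw [Icc_insert j N h, Finset.sum_insert (by simp)]

/-- Interval bounds for Ostrowski tail sums. -/
lemma Aref (hα : α ∈ Set.Ioo (0:ℝ) 1) (hirr : Irrational α) (c : ℕ → ℕ)
    (hc : ∀ k, 1 ≤ k → c k ≤ cfA α (k+1)) :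
    ∀ d i N, N + 1 = (i+1) + d →
      (-(DD α (i+1)) + DD α (N+1) ≤ (-1)^(i+1) * ∑ k ∈ Finset.Icc (i+1) N, (c k : ℝ) * th α k
      ∧ (-1)^(i+1) * ∑ k ∈ Finset.Icc (i+1) N, (c k : ℝ) * th α k ≤ DD α i - DD α (N+1)) := by
  intro d
  induction d with
  | zero =>
    intro i N hN
    have hNi : N = i := by omega
    subst hNi
    rw [show Finset.Icc (N+1) N = ∅ by rw [Finset.Icc_eq_empty]; omega]
    simp only [Finset.sum_empty, mul_zero]
    constructor
    · linarith [DD_anti hα hirr (show N+1 ≤ N+1 by omega)]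
    · linarith [DD_anti hα hirr (show N ≤ N+1 by omega), DD_pos hα hirr (N+1),
        DD_anti hα hirr (show N+1 ≤ N+1 by omega)]
  | succ d ih =>
    intro i N hN
    have hiN : i + 1 ≤ N := by omega
    have hsplit := sum_Icc_split (fun k => (c k : ℝ) * th α k) (i+1) N hiN
    have htail := ih (i+1) N (by omega)
    have hth : th α (i+1) = (-1)^(i+1) * DD α (i+1) := th_eq_DD (α:=α) (i+1)
    have hsq : ((-1:ℝ))^(i+1) * (-1)^(i+1) = 1 := by
      rw [← pow_add]; exact Even.neg_one_pow ⟨i+1, by ring⟩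
    have hsgn : ((-1:ℝ))^(i+2) = -(-1)^(i+1) := by
      rw [pow_succ]; ring
    -- (-1)^(i+1) * S(i+1) = c_{i+1} * DD_{i+1} - (-1)^(i+2) * S(i+2)
    set S2 := ∑ k ∈ Finset.Icc (i+2) N, (c k : ℝ) * th α k with hS2
    have key : (-1:ℝ)^(i+1) * ∑ k ∈ Finset.Icc (i+1) N, (c k : ℝ) * th α k
        = (c (i+1) : ℝ) * DD α (i+1) - (-1)^(i+2) * S2 := by
      rw [hsplit]
      rw [hth, hsgn]
      linear_combination (c (i+1) : ℝ) * DD α (i+1) * hsq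
    have hcb : (c (i+1) : ℝ) ≤ (cfA α (i+2) : ℝ) := by
      exact_mod_cast hc (i+1) (by omega)
    have hc0 : (0:ℝ) ≤ (c (i+1) : ℝ) := by positivity
    have hrec : DD α (i+2) = DD α i - (cfA α (i+2):ℝ) * DD α (i+1) := DD_rec (α:=α) i
    have hDpos := DD_pos hα hirr (i+1)
    constructor
    · rw [key]; nlinarith [htail.2]
    · rw [key]; nlinarith [htail.1]

/-- combined bounds at the first nonzero index K -/
lemma key_bounds (hα : α ∈ Set.Ioo (0:ℝ) 1) (hirr : Irrational α) (c : ℕ → ℕ)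
    (hc : ∀ k, 1 ≤ k → c k ≤ cfA α (k+1))
    (M K N : ℕ) (hM : 1 ≤ M) (hMK : M ≤ K) (hKN : K ≤ N)
    (hzero : ∀ j, M ≤ j → j < K → c j = 0) (hcK : 1 ≤ c K) :
    DD α (N+1) ≤ (-1)^K * ∑ k ∈ Finset.Icc M N, (c k : ℝ) * th α k
    ∧ (-1)^K * ∑ k ∈ Finset.Icc M N, (c k : ℝ) * th α k ≤ DD α (K-1) - DD α (N+1)
    ∧ (-1)^K * ∑ k ∈ Finset.Icc M N, (c k : ℝ) * th α k
        ≤ (c K : ℝ) * DD α K + DD α (K+1) - DD α (N+1) := by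
  have hsub : ∑ k ∈ Finset.Icc M N, (c k : ℝ) * th α k
      = ∑ k ∈ Finset.Icc K N, (c k : ℝ) * th α k := by
    symm
    apply Finset.sum_subset
    · intro x hx
      simp only [Finset.mem_Icc] at *
      omega
    · intro x hx hx2
      simp only [Finset.mem_Icc] at hx hx2
      have : c x = 0 := hzero x (by omega) (by omega)
      simp [this]
  rw [hsub]
  have hsplit := sum_Icc_split (fun k => (c k : ℝ) * th α k) K N hKN
  rw [hsplit]
  set S2 := ∑ k ∈ Finset.Icc (K+1) N, (c k : ℝ) * th α k with hS2
  obtain ⟨κ, hκ⟩ : ∃ κ, K = κ + 1 := ⟨K - 1, by omega⟩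
  have hK1 : K - 1 = κ := by omega
  have htail := Aref hα hirr c hc (N - K) K N (by omega)
  rw [← hS2] at htail
  have hth : th α K = (-1)^K * DD α K := th_eq_DD (α:=α) K
  have hsq : ((-1:ℝ))^K * (-1)^K = 1 := by
    rw [← pow_add]; exact Even.neg_one_pow ⟨K, by ring⟩
  have hsgn : ((-1:ℝ))^(K+1) = -(-1)^K := by rw [pow_succ]; ring
  have key : (-1:ℝ)^K * ((c K : ℝ) * th α K + S2)
      = (c K : ℝ) * DD α K + ((-1)^K * S2) := by
    rw [hth]
    linear_combination (c K : ℝ) * DD α K * hsq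
  have hSrel : (-1:ℝ)^K * S2 = -((-1)^(K+1) * S2) := by rw [hsgn]; ring
  have hcb : (c K : ℝ) ≤ (cfA α (K+1) : ℝ) := by exact_mod_cast hc K (by omega)
  have hcK' : (1:ℝ) ≤ (c K : ℝ) := by exact_mod_cast hcK
  have hrec : DD α (κ+2) = DD α κ - (cfA α (κ+2):ℝ) * DD α (κ+1) := DD_rec (α:=α) κ
  have hDpos := DD_pos hα hirr K
  have hDpos1 := DD_pos hα hirr (N+1)
  rw [key, hSrel, hK1]
  rw [hκ] at htail hcb hcK' hDpos ⊢
  have hmul1 : DD α (κ+1) ≤ (c (κ+1):ℝ) * DD α (κ+1) := by nlinarith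
  have hmul2 : (c (κ+1):ℝ) * DD α (κ+1) ≤ (cfA α (κ+2):ℝ) * DD α (κ+1) := by nlinarith
  refine ⟨?_, ?_, ?_⟩
  · linarith [htail.2]
  · linarith [htail.1, hrec]
  · linarith [htail.1]

/-- the low part of an Ostrowski representation is `< q_J` -/
lemma low_sum (hα : α ∈ Set.Ioo (0:ℝ) 1) (hirr : Irrational α) (c : ℕ → ℕ)
    (h0 : c 0 ≤ cfA α 1 - 1)
    (hc : ∀ k, 1 ≤ k → c k ≤ cfA α (k+1))
    (hrule : ∀ k, 1 ≤ k → c k = cfA α (k+1) → c (k-1) = 0) :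
    ∀ J, ∑ k ∈ Finset.range J, c k * cfQ α k < cfQ α J := by
  intro J
  induction J using Nat.strong_induction_on with
  | _ J ih =>
    match J with
    | 0 => simp [cfQ]
    | 1 =>
      have ha := cfA_pos hα hirr 0
      norm_num at ha
      simp only [Finset.sum_range_one, cfQ, Nat.mul_one]
      omega
    | (J+2) =>
      have hq1 := cfQ_pos hα hirr J
      have hq2 := cfQ_pos hα hirr (J+1)
      have ha := cfA_pos hα hirr (J+1)
      have hIH1 := ih (J+1) (by omega)
      have hIH0 := ih J (by omega)
      have hcJ : c (J+1) ≤ cfA α (J+2) := hc (J+1) (by omega)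
      have hstep : ∑ k ∈ Finset.range (J+2), c k * cfQ α k
          = (∑ k ∈ Finset.range (J+1), c k * cfQ α k) + c (J+1) * cfQ α (J+1) := by
        rw [Finset.sum_range_succ]
      have hq : cfQ α (J+2) = cfA α (J+2) * cfQ α (J+1) + cfQ α J := rfl
      rcases Nat.lt_or_ge (c (J+1)) (cfA α (J+2)) with hlt | hge
      · -- c_{J+1} ≤ a - 1
        have h1 : c (J+1) * cfQ α (J+1) ≤ (cfA α (J+2) - 1) * cfQ α (J+1) :=
          Nat.mul_le_mul_right _ (by omega)
        have h3 : (cfA α (J+2) - 1) * cfQ α (J+1) + cfQ α (J+1) = cfA α (J+2) * cfQ α (J+1) := by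
          have h2 : 1 ≤ cfA α (J+2) := cfA_pos hα hirr (J+1)
          rcases Nat.exists_eq_add_of_le h2 with ⟨a, ha2⟩
          rw [ha2, Nat.add_sub_cancel_left]
          ring
        rw [hstep, hq]
        calc ∑ k ∈ Finset.range (J+1), c k * cfQ α k + c (J+1) * cfQ α (J+1)
            < cfQ α (J+1) + (cfA α (J+2) - 1) * cfQ α (J+1) :=
              Nat.add_lt_add_of_lt_of_le hIH1 h1
          _ = cfA α (J+2) * cfQ α (J+1) := by rw [Nat.add_comm]; exact h3
          _ ≤ cfA α (J+2) * cfQ α (J+1) + cfQ α J := Nat.le_add_right _ _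
      · -- c_{J+1} = a, so c_J = 0
        have heq : c (J+1) = cfA α (J+2) := by omega
        have hcJ0 : c J = 0 := by
          have := hrule (J+1) (by omega) heq
          simpa using this
        have hsum1 : ∑ k ∈ Finset.range (J+1), c k * cfQ α k
            = ∑ k ∈ Finset.range J, c k * cfQ α k := by
          rw [Finset.sum_range_succ, hcJ0]
          simp
        rw [hstep, hsum1, hq, heq]
        rw [Nat.add_comm (cfA α (J+2) * cfQ α (J+1)) (cfQ α J)]
        exact Nat.add_lt_add_of_lt_of_le hIH0 (Nat.le_refl _)


lemma sum_range_congr (c f : ℕ → ℕ) (J J' : ℕ) (hJJ : J ≤ J')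
    (hz : ∀ k, J ≤ k → k < J' → c k = 0) :
    ∑ k ∈ Finset.range J', c k * f k = ∑ k ∈ Finset.range J, c k * f k := by
  symm
  apply Finset.sum_subset (Finset.range_subset_range.2 hJJ)
  intro x hx hx2
  simp only [Finset.mem_range] at hx hx2
  have : c x = 0 := hz x (by omega) (by omega)
  simp [this]

lemma sum_single_le (c f : ℕ → ℕ) (s : Finset ℕ) (k : ℕ) (hk : k ∈ s) :
    c k * f k ≤ ∑ j ∈ s, c j * f j :=
  Finset.single_le_sum (f := fun j => c j * f j) (fun i _ => Nat.zero_le _) hk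

end Stmt19Aux
set_option maxHeartbeats 2000000 in
open Stmt19Aux in
theorem stmt19 (α : ℝ) (hα : α ∈ Set.Ioo (0:ℝ) 1) (hirr : Irrational α)
    (M : ℕ) (hM : 1 ≤ M)
    (n : ℕ) (b : ℕ → ℕ) (hb : OstrowskiRep α n b)
    (hlow : ∃ k, k < M ∧ b k ≠ 0) (hhigh : ∃ k, M ≤ k ∧ b k ≠ 0)
    (T : ℕ) (hT : n ≤ cfQ α (T - 2))
    (b' : ℕ → ℕ) (hb' : OstrowskiRep α (cfQ α T - n) b')
    (K K' : ℕ)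
    (hK : M ≤ K ∧ b K ≠ 0 ∧ ∀ j, M ≤ j → j < K → b j = 0)
    (hK' : M ≤ K' ∧ b' K' ≠ 0 ∧ ∀ j, M ≤ j → j < K' → b' j = 0) :
    K % 2 = K' % 2 := by
  classical
  obtain ⟨hb0, hble, hbrule, Nb, hbN, hbsum⟩ := hb
  obtain ⟨hb0', hble', hbrule', Nb', hbN', hbsum'⟩ := hb'
  obtain ⟨hMK, hbK, hbzero⟩ := hK
  obtain ⟨hMK', hbK', hbzero'⟩ := hK'
  obtain ⟨k₀, hk₀M, hk₀⟩ := hlow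
  have hq1 : ∀ k, 1 ≤ cfQ α k := cfQ_pos hα hirr
  have hqmono : ∀ i j, i ≤ j → cfQ α i ≤ cfQ α j := cfQ_mono hα hirr
  have hDpos : ∀ k, 0 < DD α k := DD_pos hα hirr
  have hDanti : ∀ i j, i ≤ j → DD α j ≤ DD α i := fun i j h => DD_anti hα hirr h
  have hDstrict : ∀ i j, i < j → DD α j < DD α i := fun i j h => DD_anti_strict hα hirr h
  -- u ≥ 1
  have hu1 : 1 ≤ ∑ k ∈ Finset.range M, b k * cfQ α k := by
    have h1 := sum_single_le b (cfQ α) (Finset.range M) k₀ (by simp [hk₀M])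
    have h2 : 0 < b k₀ := Nat.pos_of_ne_zero hk₀
    have h3 := hq1 k₀
    have h4 : 1 ≤ b k₀ * cfQ α k₀ := Nat.one_le_iff_ne_zero.2 (by positivity)
    omega
  have hKNb : K ≤ Nb := by
    by_contra hcon
    exact hbK (hbN K (by omega))
  have hnsplit : n = (∑ k ∈ Finset.range M, b k * cfQ α k)
      + ∑ k ∈ Finset.Icc M Nb, b k * cfQ α k := by
    rw [hbsum, Finset.range_eq_Ico,
      ← Finset.sum_Ico_consecutive _ (Nat.zero_le M) (show M ≤ Nb + 1 by omega),
      ← Finset.range_eq_Ico, Finset.Ico_add_one_right_eq_Icc]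
  have hbig : ∀ k, M ≤ k → 1 ≤ b k → cfQ α k + 1 ≤ n := by
    intro k hk hbk
    have hkNb : k ≤ Nb := by
      by_contra hcon
      have := hbN k (by omega)
      omega
    have h2 := sum_single_le b (cfQ α) (Finset.Icc M Nb) k (by simp [Finset.mem_Icc]; omega)
    have h3 : cfQ α k ≤ b k * cfQ α k := Nat.le_mul_of_pos_left _ (by omega)
    omega
  have hKT : K ≤ T - 2 := by
    by_contra hcon
    have h1 : cfQ α (T-2) ≤ cfQ α K := hqmono _ _ (by omega)
    have h2 := hbig K hMK (by omega)
    omega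
  have hM2T : M + 2 ≤ T := by omega
  have hbz : ∀ k, T - 1 ≤ k → b k = 0 := by
    intro k hk
    by_contra hcon
    have h1 := hbig k (by omega) (by omega)
    have h2 : cfQ α (T-2) ≤ cfQ α k := hqmono _ _ (by omega)
    omega
  have hnT : n = ∑ k ∈ Finset.range (T-1), b k * cfQ α k := by
    rcases le_or_gt (Nb+1) (T-1) with h | h
    · rw [hbsum]
      exact (sum_range_congr b (cfQ α) (Nb+1) (T-1) h (fun k h1 h2 => hbN k (by omega))).symm
    · rw [hbsum]
      exact sum_range_congr b (cfQ α) (T-1) (Nb+1) (by omega) (fun k h1 h2 => hbz k (by omega))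
  have hn1 : 1 ≤ n := by omega
  have hnqT : n ≤ cfQ α T := le_trans hT (hqmono _ _ (by omega))
  set m := cfQ α T - n with hm
  have hmn : m + n = cfQ α T := by omega
  have hbig' : ∀ k, 1 ≤ b' k → k ≤ Nb' → cfQ α k ≤ m := by
    intro k hbk hkN
    have h2 := sum_single_le b' (cfQ α) (Finset.range (Nb'+1)) k (by simp; omega)
    have h3 : cfQ α k ≤ b' k * cfQ α k := Nat.le_mul_of_pos_left _ (by omega)
    omega
  have hK'T : K' ≤ T - 1 := by
    by_contra hcon
    have hkN : K' ≤ Nb' := by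
      by_contra hcon2
      exact hbK' (hbN' K' (by omega))
    have h1 := hbig' K' (by omega) hkN
    have h2 : cfQ α T ≤ cfQ α K' := hqmono _ _ (by omega)
    omega
  have hbz' : ∀ k, T ≤ k → b' k = 0 := by
    intro k hk
    by_contra hcon
    rcases le_or_gt k Nb' with h | h
    · have h1 := hbig' k (by omega) h
      have h2 : cfQ α T ≤ cfQ α k := hqmono _ _ hk
      omega
    · exact hcon (hbN' k (by omega))
  have hmT : m = ∑ k ∈ Finset.range T, b' k * cfQ α k := by
    rcases le_or_gt (Nb'+1) T with h | h
    · rw [hbsum']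
      exact (sum_range_congr b' (cfQ α) (Nb'+1) T h (fun k h1 h2 => hbN' k (by omega))).symm
    · rw [hbsum']
      exact sum_range_congr b' (cfQ α) T (Nb'+1) (by omega) (fun k h1 h2 => hbz' k (by omega))
  -- splits at M
  have hIcc1 : Finset.Icc M (T-2) = Finset.Ico M (T-1) := by
    rw [← Finset.Ico_add_one_right_eq_Icc]
    congr 1
    omega
  have hIcc2 : Finset.Icc M (T-1) = Finset.Ico M T := by
    rw [← Finset.Ico_add_one_right_eq_Icc]
    congr 1
    omega
  have hnsplit2 : n = (∑ k ∈ Finset.range M, b k * cfQ α k)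
      + ∑ k ∈ Finset.Icc M (T-2), b k * cfQ α k := by
    rw [hnT, Finset.range_eq_Ico, hIcc1,
      ← Finset.sum_Ico_consecutive _ (Nat.zero_le M) (show M ≤ T-1 by omega),
      ← Finset.range_eq_Ico]
  have hmsplit : m = (∑ k ∈ Finset.range M, b' k * cfQ α k)
      + ∑ k ∈ Finset.Icc M (T-1), b' k * cfQ α k := by
    rw [hmT, Finset.range_eq_Ico, hIcc2,
      ← Finset.sum_Ico_consecutive _ (Nat.zero_le M) (show M ≤ T by omega),
      ← Finset.range_eq_Ico]
  have huM : (∑ k ∈ Finset.range M, b k * cfQ α k) < cfQ α M :=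
    low_sum hα hirr b hb0 hble hbrule M
  have hu'M : (∑ k ∈ Finset.range M, b' k * cfQ α k) < cfQ α M :=
    low_sum hα hirr b' hb0' hble' hbrule' M
  -- real-valued sums
  set Hr := ∑ k ∈ Finset.Icc M (T-2), (b k : ℝ) * th α k with hHrdef
  set Hr' := ∑ k ∈ Finset.Icc M (T-1), (b' k : ℝ) * th α k with hHr'def
  have hHrval : Hr = (∑ k ∈ Finset.Icc M (T-2), b k * cfQ α k : ℕ) * α
      - (∑ k ∈ Finset.Icc M (T-2), b k * cfP α k : ℕ) := by
    rw [hHrdef]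
    push_cast
    rw [Finset.sum_mul, ← Finset.sum_sub_distrib]
    apply Finset.sum_congr rfl
    intro k _
    simp only [th]
    ring
  have hHr'val : Hr' = (∑ k ∈ Finset.Icc M (T-1), b' k * cfQ α k : ℕ) * α
      - (∑ k ∈ Finset.Icc M (T-1), b' k * cfP α k : ℕ) := by
    rw [hHr'def]
    push_cast
    rw [Finset.sum_mul, ← Finset.sum_sub_distrib]
    apply Finset.sum_congr rfl
    intro k _
    simp only [th]
    ring
  set u := ∑ k ∈ Finset.range M, b k * cfQ α k with hudef
  set u' := ∑ k ∈ Finset.range M, b' k * cfQ α k with hu'def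
  set s := u + u' with hsdef
  set r₀ : ℤ := (cfP α T : ℤ) - (∑ k ∈ Finset.Icc M (T-2), b k * cfP α k : ℕ)
      - (∑ k ∈ Finset.Icc M (T-1), b' k * cfP α k : ℕ) with hr₀def
  have hsum4 : (∑ k ∈ Finset.Icc M (T-2), b k * cfQ α k)
      + (∑ k ∈ Finset.Icc M (T-1), b' k * cfQ α k) + s = cfQ α T := by
    omega
  have hEQ0 : Hr + Hr' = th α T - ((s:ℝ) * α - (r₀:ℝ)) := by
    rw [hHrval, hHr'val, hr₀def]
    have hc : ((∑ k ∈ Finset.Icc M (T-2), b k * cfQ α k : ℕ) : ℝ)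
        + ((∑ k ∈ Finset.Icc M (T-1), b' k * cfQ α k : ℕ) : ℝ)
        = (cfQ α T : ℝ) - (s : ℝ) := by
      have := hsum4
      have h2 : ((∑ k ∈ Finset.Icc M (T-2), b k * cfQ α k)
        + (∑ k ∈ Finset.Icc M (T-1), b' k * cfQ α k) + s : ℝ) = (cfQ α T : ℝ) := by
        exact_mod_cast congrArg (Nat.cast : ℕ → ℝ) this
      push_cast at h2 ⊢
      linarith
    simp only [th]
    push_cast
    push_cast at hc
    linear_combination α * hc
  -- Cramer decomposition
  obtain ⟨m₀, hM0⟩ : ∃ m₀, M = m₀ + 1 := ⟨M - 1, by omega⟩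
  have hdet := det_pq α m₀
  rw [← hM0] at hdet
  set e : ℤ := (-1)^m₀ with hedef
  have hee : e * e = 1 := by
    rw [hedef, ← pow_add]
    exact Even.neg_one_pow ⟨m₀, by ring⟩
  set x : ℤ := e * ((s:ℤ) * cfP α M - r₀ * cfQ α M) with hxdef
  set y : ℤ := e * (r₀ * cfQ α m₀ - (s:ℤ) * cfP α m₀) with hydef
  have hxq : x * cfQ α m₀ + y * cfQ α M = (s:ℤ) := by
    rw [hxdef, hydef]
    linear_combination ((s:ℤ) * e) * hdet + (s:ℤ) * hee
  have hxp : x * cfP α m₀ + y * cfP α M = r₀ := by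
    rw [hxdef, hydef]
    linear_combination (r₀ * e) * hdet + r₀ * hee
  have hsxy : (s:ℝ) * α - (r₀:ℝ) = (x:ℝ) * th α m₀ + (y:ℝ) * th α M := by
    have h1 : ((x * cfQ α m₀ + y * cfQ α M : ℤ) : ℝ) = (s:ℝ) := by exact_mod_cast congrArg (Int.cast : ℤ → ℝ) hxq
    have h2 : ((x * cfP α m₀ + y * cfP α M : ℤ) : ℝ) = (r₀:ℝ) := by exact_mod_cast congrArg (Int.cast : ℤ → ℝ) hxp
    push_cast at h1 h2
    simp only [th]
    linear_combination (-α) * h1 + h2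
  -- tail-sum bounds
  have hT21 : T - 2 + 1 = T - 1 := by omega
  have hT11 : T - 1 + 1 = T := by omega
  have KB := key_bounds hα hirr b hble M K (T-2) hM hMK hKT hbzero (by omega)
  rw [hT21] at KB
  have KB' := key_bounds hα hirr b' hble' M K' (T-1) hM hMK' hK'T hbzero' (by omega)
  rw [hT11] at KB'
  set g := (-1:ℝ)^K * Hr with hgdef
  set g' := (-1:ℝ)^K' * Hr' with hg'def
  obtain ⟨F1, F2, F3⟩ := KB
  obtain ⟨G1, G2, G3⟩ := KB'
  have hHrg : Hr = (-1:ℝ)^K * g := by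
    rw [hgdef, ← mul_assoc, neg_one_sq_pow, one_mul]
  have hHrg' : Hr' = (-1:ℝ)^K' * g' := by
    rw [hg'def, ← mul_assoc, neg_one_sq_pow, one_mul]
  have hEQ : (-1:ℝ)^K * g + (-1:ℝ)^K' * g'
      = th α T - ((x:ℝ) * th α m₀ + (y:ℝ) * th α M) := by
    rw [← hHrg, ← hHrg', hEQ0, hsxy]
  set c1 : ℝ := (-1)^(K - M) with hc1def
  set c2 : ℝ := (-1)^(K' - M) with hc2def
  set c0 : ℝ := (-1)^(T - M) with hc0def
  have hpowK : (-1:ℝ)^K = (-1)^M * c1 := by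
    rw [hc1def, ← pow_add]
    congr 1
    omega
  have hpowK' : (-1:ℝ)^K' = (-1)^M * c2 := by
    rw [hc2def, ← pow_add]
    congr 1
    omega
  have hpowT : (-1:ℝ)^T = (-1)^M * c0 := by
    rw [hc0def, ← pow_add]
    congr 1
    omega
  have hpm : (-1:ℝ)^m₀ = -(-1)^M := by
    rw [hM0, pow_succ]
    ring
  have hEQf : c1 * g + c2 * g' = c0 * DD α T + (x:ℝ) * DD α m₀ - (y:ℝ) * DD α M := by
    have e1 := hEQ
    rw [th_eq_DD (α:=α) T, th_eq_DD (α:=α) m₀, th_eq_DD (α:=α) M,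
      hpowK, hpowK', hpowT, hpm] at e1
    linear_combination ((-1:ℝ)^M) * e1
      - (c1 * g + c2 * g' - (c0 * DD α T + (x:ℝ) * DD α m₀ - (y:ℝ) * DD α M)) * (neg_one_sq_pow M)
  -- parity values of the sign constants
  have hc1v : ((K - M) % 2 = 0 ∧ c1 = 1) ∨ ((K - M) % 2 = 1 ∧ c1 = -1) := by
    rcases Nat.even_or_odd (K - M) with h | h
    · exact Or.inl ⟨Nat.even_iff.1 h, Even.neg_one_pow h⟩
    · exact Or.inr ⟨Nat.odd_iff.1 h, Odd.neg_one_pow h⟩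
  have hc2v : ((K' - M) % 2 = 0 ∧ c2 = 1) ∨ ((K' - M) % 2 = 1 ∧ c2 = -1) := by
    rcases Nat.even_or_odd (K' - M) with h | h
    · exact Or.inl ⟨Nat.even_iff.1 h, Even.neg_one_pow h⟩
    · exact Or.inr ⟨Nat.odd_iff.1 h, Odd.neg_one_pow h⟩
  have hc0v : c0 = 1 ∨ c0 = -1 := by
    rcases Nat.even_or_odd (T - M) with h | h
    · exact Or.inl (Even.neg_one_pow h)
    · exact Or.inr (Odd.neg_one_pow h)
  -- D-facts
  have d0 : 0 < DD α T := hDpos T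
  have dT1 : 0 < DD α (T-1) := hDpos (T-1)
  have d1 : DD α T < DD α (T-1) := hDstrict _ _ (by omega)
  have d2 : DD α (T-1) ≤ DD α (M+1) := hDanti _ _ (by omega)
  have d3 : DD α (M+1) < DD α M := hDstrict _ _ (by omega)
  have d4 : DD α M < DD α m₀ := hDstrict _ _ (by omega)
  have hrecM : DD α (M+1) = DD α m₀ - (cfA α (M+1):ℝ) * DD α M := by
    have h := DD_rec (α:=α) m₀
    rw [show m₀+2 = M+1 by omega, show m₀+1 = M by omega] at h
    exact h
  have haM : (1:ℝ) ≤ (cfA α (M+1):ℝ) := by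
    exact_mod_cast cfA_pos hα hirr M
  have d5 : DD α (M+1) ≤ DD α m₀ - DD α M := by
    have h2 : (1:ℝ) * DD α M ≤ (cfA α (M+1):ℝ) * DD α M :=
      mul_le_mul_of_nonneg_right haM (le_of_lt (hDpos M))
    rw [one_mul] at h2
    linarith [hrecM]
  -- bound variants
  have ht1 : c0 * DD α T ≤ DD α T ∧ -(DD α T) ≤ c0 * DD α T := by
    rcases hc0v with h | h <;> rw [h] <;> constructor <;> linarith
  have hgpos : 0 < g := lt_of_lt_of_le dT1 F1
  have hg'pos : 0 < g' := lt_of_lt_of_le d0 G1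
  have F2a : g ≤ DD α m₀ - DD α (T-1) := by
    have := hDanti m₀ (K-1) (by omega)
    linarith [F2]
  have F2b : M + 1 ≤ K → g ≤ DD α M - DD α (T-1) := by
    intro h
    have := hDanti M (K-1) (by omega)
    linarith [F2]
  have F2c : M + 2 ≤ K → g ≤ DD α (M+1) - DD α (T-1) := by
    intro h
    have := hDanti (M+1) (K-1) (by omega)
    linarith [F2]
  have G2a : g' ≤ DD α m₀ - DD α T := by
    have := hDanti m₀ (K'-1) (by omega)
    linarith [G2]
  have G2b : M + 1 ≤ K' → g' ≤ DD α M - DD α T := by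
    intro h
    have := hDanti M (K'-1) (by omega)
    linarith [G2]
  have G2c : M + 2 ≤ K' → g' ≤ DD α (M+1) - DD α T := by
    intro h
    have := hDanti (M+1) (K'-1) (by omega)
    linarith [G2]
  have LB1 : -(DD α M) + DD α (T-1) ≤ c1 * g := by
    rcases hc1v with ⟨h, hcv⟩ | ⟨h, hcv⟩
    · rw [hcv, one_mul]
      linarith [d2, d3]
    · rw [hcv]
      have := F2b (by omega)
      linarith
  have LB2 : -(DD α M) + DD α T ≤ c2 * g' := by
    rcases hc2v with ⟨h, hcv⟩ | ⟨h, hcv⟩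
    · rw [hcv, one_mul]
      linarith [d1, d2, d3]
    · rw [hcv]
      have := G2b (by omega)
      linarith
  have UB1 : c1 * g ≤ DD α m₀ - DD α (T-1) := by
    rcases hc1v with ⟨h, hcv⟩ | ⟨h, hcv⟩
    · rw [hcv, one_mul]; exact F2a
    · rw [hcv]
      have := hDanti m₀ (T-1) (by omega)
      linarith
  have UB2 : c2 * g' ≤ DD α m₀ - DD α T := by
    rcases hc2v with ⟨h, hcv⟩ | ⟨h, hcv⟩
    · rw [hcv, one_mul]; exact G2a
    · rw [hcv]
      have := hDanti m₀ T (by omega)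
      linarith
  -- integer facts about s
  have hsZ : (1:ℤ) ≤ (s:ℤ) := by exact_mod_cast hu1.trans (by omega)
  have hsleZ : (s:ℤ) ≤ 2 * (cfQ α M:ℤ) - 2 := by
    have : s ≤ 2 * cfQ α M - 2 := by omega
    omega
  have hqm₀M : (cfQ α m₀:ℤ) ≤ (cfQ α M:ℤ) := by exact_mod_cast hqmono m₀ M (by omega)
  have hqm₀1 : (1:ℤ) ≤ (cfQ α m₀:ℤ) := by exact_mod_cast hq1 m₀
  have hDm₀pos := hDpos m₀
  have hDMpos := hDpos M
  -- classification of (x, y)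
  have hxy_cases : (x = 1 ∧ y = 0) ∨ (x = 0 ∧ y = 1) ∨ (x = 1 ∧ y = 1) ∨ (x = 2 ∧ y = 1) := by
    rcases (show y ≤ -1 ∨ y = 0 ∨ y = 1 ∨ 2 ≤ y by omega) with hy | hy | hy | hy
    · exfalso
      have hx1 : 1 - y ≤ x := by
        by_contra hcon
        push_neg at hcon
        have h1 : x * (cfQ α m₀:ℤ) ≤ (-y) * (cfQ α m₀:ℤ) :=
          mul_le_mul_of_nonneg_right (by omega) (by omega)
        have h2 : (-y) * (cfQ α m₀:ℤ) ≤ (-y) * (cfQ α M:ℤ) :=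
          mul_le_mul_of_nonneg_left hqm₀M (by omega)
        linarith [hxq, hsZ]
      have hxR : (2:ℝ) ≤ (x:ℝ) := by exact_mod_cast (show (2:ℤ) ≤ x by omega)
      have hyR : (y:ℝ) ≤ -1 := by exact_mod_cast hy
      have hp1 : 2 * DD α m₀ ≤ (x:ℝ) * DD α m₀ :=
        mul_le_mul_of_nonneg_right hxR (le_of_lt hDm₀pos)
      have hp2 : (y:ℝ) * DD α M ≤ (-1) * DD α M :=
        mul_le_mul_of_nonneg_right hyR (le_of_lt hDMpos)
      linarith [hEQf, UB1, UB2, ht1.2, dT1, hDMpos]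
    · have hx0 : 1 ≤ x := by
        by_contra hcon
        push_neg at hcon
        have h1 : x * (cfQ α m₀:ℤ) ≤ 0 :=
          mul_nonpos_of_nonpos_of_nonneg (by omega) (by omega)
        rw [hy] at hxq
        linarith [hxq, hsZ]
      rcases (show x = 1 ∨ 2 ≤ x by omega) with hx | hx
      · exact Or.inl ⟨hx, hy⟩
      · exfalso
        rw [hy] at hEQf
        push_cast at hEQf
        have hxR : (2:ℝ) ≤ (x:ℝ) := by exact_mod_cast hx
        have hp1 : 2 * DD α m₀ ≤ (x:ℝ) * DD α m₀ :=
          mul_le_mul_of_nonneg_right hxR (le_of_lt hDm₀pos)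
        linarith [hEQf, UB1, UB2, ht1.2, dT1]
    · rcases (show x ≤ -1 ∨ x = 0 ∨ x = 1 ∨ x = 2 ∨ 3 ≤ x by omega) with hx | hx | hx | hx | hx
      · exfalso
        rw [hy] at hEQf
        push_cast at hEQf
        have hxR : (x:ℝ) ≤ -1 := by exact_mod_cast hx
        have hp1 : (x:ℝ) * DD α m₀ ≤ (-1) * DD α m₀ :=
          mul_le_mul_of_nonneg_right hxR (le_of_lt hDm₀pos)
        linarith [hEQf, LB1, LB2, ht1.1, d4, dT1]
      · exact Or.inr (Or.inl ⟨hx, hy⟩)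
      · exact Or.inr (Or.inr (Or.inl ⟨hx, hy⟩))
      · exact Or.inr (Or.inr (Or.inr ⟨hx, hy⟩))
      · exfalso
        rw [hy] at hEQf
        push_cast at hEQf
        have hxR : (3:ℝ) ≤ (x:ℝ) := by exact_mod_cast hx
        have hp1 : 3 * DD α m₀ ≤ (x:ℝ) * DD α m₀ :=
          mul_le_mul_of_nonneg_right hxR (le_of_lt hDm₀pos)
        linarith [hEQf, UB1, UB2, ht1.2, d4, dT1]
    · exfalso
      have hx0 : x ≤ -1 := by
        by_contra hcon
        push_neg at hcon
        have h1 : 0 ≤ x * (cfQ α m₀:ℤ) := mul_nonneg (by omega) (by omega)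
        have h2 : 2 * (cfQ α M:ℤ) ≤ y * (cfQ α M:ℤ) :=
          mul_le_mul_of_nonneg_right (by omega) (by omega)
        linarith [hxq, hsleZ]
      have hxR : (x:ℝ) ≤ -1 := by exact_mod_cast hx0
      have hyR : (2:ℝ) ≤ (y:ℝ) := by exact_mod_cast hy
      have hp1 : (x:ℝ) * DD α m₀ ≤ (-1) * DD α m₀ :=
        mul_le_mul_of_nonneg_right hxR (le_of_lt hDm₀pos)
      have hp2 : 2 * DD α M ≤ (y:ℝ) * DD α M :=
        mul_le_mul_of_nonneg_right hyR (le_of_lt hDMpos)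
      linarith [hEQf, LB1, LB2, ht1.1, dT1, hDm₀pos]
  -- the parity comparison
  have hparity : (K - M) % 2 = (K' - M) % 2 := by
    rcases hc1v with ⟨hp1, hcv1⟩ | ⟨hp1, hcv1⟩ <;>
      rcases hc2v with ⟨hp2, hcv2⟩ | ⟨hp2, hcv2⟩
    · omega
    · -- c1 = 1, c2 = -1 (mismatch A)
      exfalso
      rw [hcv1, hcv2] at hEQf
      rcases hxy_cases with ⟨hx, hy⟩ | ⟨hx, hy⟩ | ⟨hx, hy⟩ | ⟨hx, hy⟩ <;>
        rw [hx, hy] at hEQf <;> push_cast at hEQf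
      · linarith [hEQf, F2a, G1, ht1.2, dT1]
      · have h := G2b (by omega)
        linarith [hEQf, F1, ht1.1, dT1, h]
      · rcases Nat.lt_or_ge M K with hKM | hKM
        · have h := F2c (by omega)
          linarith [hEQf, G1, ht1.2, d5, dT1]
        · have hKMe : K = M := by omega
          subst hKMe
          rcases Nat.lt_or_ge (b K) (cfA α (K+1)) with hbM | hbM
          · have hcast : (b K : ℝ) ≤ (cfA α (K+1):ℝ) - 1 := by
              have h2 : (b K:ℝ) + 1 ≤ (cfA α (K+1):ℝ) := by exact_mod_cast hbM
              linarith
            have hp : (b K:ℝ) * DD α K ≤ ((cfA α (K+1):ℝ) - 1) * DD α K :=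
              mul_le_mul_of_nonneg_right hcast (le_of_lt hDMpos)
            linarith [hEQf, F3, G1, ht1.2, hrecM, hp, dT1]
          · have hbMe : b K = cfA α (K+1) := by
              have := hble K hM
              omega
            have hbm₀ : b m₀ = 0 := by
              have h2 := hbrule K hM hbMe
              rwa [show K - 1 = m₀ by omega] at h2
            have hum₀ : u < cfQ α m₀ := by
              have h1 : u = ∑ k ∈ Finset.range m₀, b k * cfQ α k := by
                rw [hudef, hM0, Finset.sum_range_succ, hbm₀]
                simp
              rw [h1]
              exact low_sum hα hirr b hb0 hble hbrule m₀
            have hsval : (s:ℤ) = (cfQ α m₀:ℤ) + (cfQ α K:ℤ) := by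
              rw [← hxq, hx, hy]
              ring
            have hsval' : s = cfQ α m₀ + cfQ α K := by exact_mod_cast hsval
            omega
      · linarith [hEQf, F2a, G1, ht1.2, d4, dT1]
    · -- c1 = -1, c2 = 1 (mismatch B)
      exfalso
      rw [hcv1, hcv2] at hEQf
      rcases hxy_cases with ⟨hx, hy⟩ | ⟨hx, hy⟩ | ⟨hx, hy⟩ | ⟨hx, hy⟩ <;>
        rw [hx, hy] at hEQf <;> push_cast at hEQf
      · linarith [hEQf, G2a, F1, ht1.2, dT1]
      · have h := F2b (by omega)
        linarith [hEQf, G1, ht1.1, dT1, h]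
      · rcases Nat.lt_or_ge M K' with hKM | hKM
        · have h := G2c (by omega)
          linarith [hEQf, F1, ht1.2, d5, dT1]
        · have hKMe : K' = M := by omega
          subst hKMe
          rcases Nat.lt_or_ge (b' K') (cfA α (K'+1)) with hbM | hbM
          · have hcast : (b' K' : ℝ) ≤ (cfA α (K'+1):ℝ) - 1 := by
              have h2 : (b' K':ℝ) + 1 ≤ (cfA α (K'+1):ℝ) := by exact_mod_cast hbM
              linarith
            have hp : (b' K':ℝ) * DD α K' ≤ ((cfA α (K'+1):ℝ) - 1) * DD α K' :=
              mul_le_mul_of_nonneg_right hcast (le_of_lt hDMpos)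
            linarith [hEQf, G3, F1, ht1.2, hrecM, hp, dT1]
          · have hbMe : b' K' = cfA α (K'+1) := by
              have := hble' K' hM
              omega
            have hbm₀ : b' m₀ = 0 := by
              have h2 := hbrule' K' hM hbMe
              rwa [show K' - 1 = m₀ by omega] at h2
            have hum₀ : u' < cfQ α m₀ := by
              have h1 : u' = ∑ k ∈ Finset.range m₀, b' k * cfQ α k := by
                rw [hu'def, hM0, Finset.sum_range_succ, hbm₀]
                simp
              rw [h1]
              exact low_sum hα hirr b' hb0' hble' hbrule' m₀
            have hsval : (s:ℤ) = (cfQ α m₀:ℤ) + (cfQ α K':ℤ) := by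
              rw [← hxq, hx, hy]
              ring
            have hsval' : s = cfQ α m₀ + cfQ α K' := by exact_mod_cast hsval
            omega
      · linarith [hEQf, G2a, F1, ht1.2, d4, dT1]
    · omega
  omega
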